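/- The map ε_p(a) = (1/(n−1))·a + (1 − 1/(n−1))·(p/n)·1ₙ maps B_n(p) into B_n^0(p); in particular, for every Hermitian a with Tr a = p > 0 and ‖a − (p/n)1ₙ‖² ≤ ((n−1)/n)p², the matrix ε_p(a) is positive semidefinite with trace p. -/

import Mathlib

open ComplexOrder

lemma trace_shift_sq {m : ℕ} (A : Matrix (Fin m) (Fin m) ℂ) (hA : A.IsHermitian) (c : ℝ) :
    Matrix.trace ((A - (c:ℂ) • 1) * (A - (c:ℂ) • 1)) =
      ((∑ i, (hA.eigenvalues i - c)^2 : ℝ) : ℂ) := by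
  set U : Matrix (Fin m) (Fin m) ℂ := (hA.eigenvectorUnitary : Matrix (Fin m) (Fin m) ℂ) with hUdef
  have hU1 : U * star U = 1 := (Matrix.mem_unitaryGroup_iff).mp hA.eigenvectorUnitary.2
  have hU2 : star U * U = 1 := (Matrix.mem_unitaryGroup_iff').mp hA.eigenvectorUnitary.2
  have h1 : A - (c:ℂ) • 1 = U * Matrix.diagonal (fun i => ((hA.eigenvalues i - c : ℝ) : ℂ)) * star U := by
    conv_lhs => rw [hA.spectral_theorem, Unitary.conjStarAlgAut_apply]
    have hc : (c:ℂ) • (1 : Matrix (Fin m) (Fin m) ℂ) = U * ((c:ℂ) • 1) * star U := by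
      rw [Matrix.mul_smul, mul_one, Matrix.smul_mul, hU1]
    rw [hc, ← Matrix.sub_mul, ← Matrix.mul_sub]
    congr 1
    rw [Matrix.smul_one_eq_diagonal, Matrix.diagonal_sub]
    congr 1
    ext i
    simp
  rw [h1]
  have h2 : ∀ X : Matrix (Fin m) (Fin m) ℂ, (U * X * star U) * (U * X * star U) = U * (X * X) * star U := by
    intro X
    calc (U * X * star U) * (U * X * star U) = U * (X * ((star U * U) * (X * star U))) := by
          simp only [mul_assoc]
      _ = U * (X * X) * star U := by rw [hU2, one_mul, mul_assoc, mul_assoc]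
  rw [h2, Matrix.trace_mul_cycle, ← mul_assoc, hU2, one_mul, Matrix.diagonal_mul_diagonal,
    Matrix.trace_diagonal]
  push_cast
  exact Finset.sum_congr rfl fun i _ => by ring

lemma trace_eq_sum_eig {m : ℕ} (A : Matrix (Fin m) (Fin m) ℂ) (hA : A.IsHermitian) :
    Matrix.trace A = ((∑ i, hA.eigenvalues i : ℝ) : ℂ) := by
  have hU2 : star (hA.eigenvectorUnitary : Matrix (Fin m) (Fin m) ℂ) *
      (hA.eigenvectorUnitary : Matrix (Fin m) (Fin m) ℂ) = 1 :=
    (Matrix.mem_unitaryGroup_iff').mp hA.eigenvectorUnitary.2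
  conv_lhs => rw [hA.spectral_theorem, Unitary.conjStarAlgAut_apply]
  rw [Matrix.trace_mul_cycle, hU2, one_mul, Matrix.trace_diagonal]
  push_cast
  rfl

set_option maxHeartbeats 1000000 in
theorem stmt_4 (n : ℕ) (hn : 2 ≤ n) (a : Matrix (Fin n) (Fin n) ℂ)
    (ha : a.IsHermitian) (p : ℝ) (hp : 0 < p) (htr : Matrix.trace a = (p : ℂ))
    (hball : Complex.re
        (Matrix.trace ((a - ((p : ℂ) / n) • (1 : Matrix (Fin n) (Fin n) ℂ)) *
          (a - ((p : ℂ) / n) • (1 : Matrix (Fin n) (Fin n) ℂ))))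
      ≤ (((n : ℝ) - 1) / n) * p ^ 2) :
    Matrix.trace ((1 / ((n : ℂ) - 1)) • a +
        (1 - 1 / ((n : ℂ) - 1)) • (((p : ℂ) / n) • (1 : Matrix (Fin n) (Fin n) ℂ))) = (p : ℂ) ∧
    Complex.re
        (Matrix.trace ((((1 / ((n : ℂ) - 1)) • a +
            (1 - 1 / ((n : ℂ) - 1)) • (((p : ℂ) / n) • (1 : Matrix (Fin n) (Fin n) ℂ))) -
              ((p : ℂ) / n) • (1 : Matrix (Fin n) (Fin n) ℂ)) *
          (((1 / ((n : ℂ) - 1)) • a +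
            (1 - 1 / ((n : ℂ) - 1)) • (((p : ℂ) / n) • (1 : Matrix (Fin n) (Fin n) ℂ))) -
              ((p : ℂ) / n) • (1 : Matrix (Fin n) (Fin n) ℂ))))
      ≤ p ^ 2 / ((n : ℝ) * ((n : ℝ) - 1)) ∧
    ((1 / ((n : ℂ) - 1)) • a +
        (1 - 1 / ((n : ℂ) - 1)) • (((p : ℂ) / n) • (1 : Matrix (Fin n) (Fin n) ℂ))).PosSemidef := by
  have hn1 : (1:ℝ) ≤ (n:ℝ) - 1 := by
    have : (2:ℝ) ≤ n := by exact_mod_cast hn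
    linarith
  have hnR : (0:ℝ) < n := by positivity
  have hnR1 : (0:ℝ) < (n:ℝ) - 1 := by linarith
  have hnC : ((n:ℂ) - 1) ≠ 0 := by
    intro h
    have := congrArg Complex.re h
    simp at this
    linarith
  have hnC0 : (n:ℂ) ≠ 0 := Nat.cast_ne_zero.mpr (by omega)
  set ε : Matrix (Fin n) (Fin n) ℂ :=
    (1 / ((n : ℂ) - 1)) • a + (1 - 1 / ((n : ℂ) - 1)) • (((p : ℂ) / n) • 1) with hεdef
  have htrace : Matrix.trace ε = (p:ℂ) := by
    rw [hεdef, Matrix.trace_add, Matrix.trace_smul, Matrix.trace_smul, Matrix.trace_smul,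
      Matrix.trace_one, Fintype.card_fin, htr]
    simp only [smul_eq_mul]
    field_simp
    ring
  have hcoef : (1 / ((n:ℂ) - 1)) = (((1 / ((n:ℝ) - 1)) : ℝ) : ℂ) := by push_cast; ring
  have hεher : ε.IsHermitian := by
    rw [hεdef]
    unfold Matrix.IsHermitian
    rw [Matrix.conjTranspose_add, Matrix.conjTranspose_smul, Matrix.conjTranspose_smul,
      Matrix.conjTranspose_smul, ha, Matrix.conjTranspose_one]
    congr 1 <;> congr 1 <;>
      simp [Complex.ext_iff]
  have hdiff : ε - ((p:ℂ)/n) • 1 = (1 / ((n:ℂ) - 1)) • (a - ((p:ℂ)/n) • 1) := by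
    rw [hεdef]
    module
  have hsq : Matrix.trace ((ε - ((p:ℂ)/n) • 1) * (ε - ((p:ℂ)/n) • 1)) =
      ((1 / ((n:ℂ) - 1)) * (1 / ((n:ℂ) - 1))) *
        Matrix.trace ((a - ((p:ℂ)/n) • 1) * (a - ((p:ℂ)/n) • 1)) := by
    rw [hdiff, Matrix.smul_mul, Matrix.mul_smul, Matrix.trace_smul, Matrix.trace_smul,
      smul_eq_mul, smul_eq_mul]
    ring
  have hre2 : Complex.re (Matrix.trace ((ε - ((p:ℂ)/n) • 1) * (ε - ((p:ℂ)/n) • 1)))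
      ≤ p ^ 2 / ((n:ℝ) * ((n:ℝ) - 1)) := by
    rw [hsq, hcoef, ← Complex.ofReal_mul, Complex.re_ofReal_mul]
    have hc2 : (0:ℝ) < 1 / ((n:ℝ) - 1) * (1 / ((n:ℝ) - 1)) := by positivity
    have key : (1 / ((n:ℝ) - 1) * (1 / ((n:ℝ) - 1))) * ((((n:ℝ) - 1) / n) * p ^ 2)
        = p ^ 2 / ((n:ℝ) * ((n:ℝ) - 1)) := by
      field_simp
    calc (1 / ((n:ℝ) - 1) * (1 / ((n:ℝ) - 1))) *
          Complex.re (Matrix.trace ((a - ((p:ℂ)/n) • 1) * (a - ((p:ℂ)/n) • 1)))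
        ≤ (1 / ((n:ℝ) - 1) * (1 / ((n:ℝ) - 1))) * ((((n:ℝ) - 1) / n) * p ^ 2) :=
          mul_le_mul_of_nonneg_left hball hc2.le
      _ = p ^ 2 / ((n:ℝ) * ((n:ℝ) - 1)) := key
  refine ⟨htrace, hre2, ?_⟩
  set ν := hεher.eigenvalues with hνdef
  have hsum : ∑ i, ν i = p := by
    have := trace_eq_sum_eig ε hεher
    rw [htrace] at this
    exact_mod_cast this.symm
  have hSsq : ∑ i, (ν i - p / n) ^ 2 ≤ p ^ 2 / ((n:ℝ) * ((n:ℝ) - 1)) := by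
    have h := trace_shift_sq ε hεher (p / n)
    have hcast : ((p:ℂ)/n) = (((p / n : ℝ)) : ℂ) := by push_cast; ring
    rw [hcast, h] at hre2
    simpa only [Complex.ofReal_re] using hre2
  apply hεher.posSemidef_iff_eigenvalues_nonneg.mpr
  intro i
  set y : Fin n → ℝ := fun j => ν j - p / n with hy
  have hysum : ∑ j, y j = 0 := by
    rw [hy, Finset.sum_sub_distrib, hsum, Finset.sum_const]
    simp
    field_simp
    ring
  have hyi : y i = - ∑ j ∈ Finset.univ.erase i, y j := by
    have := Finset.add_sum_erase Finset.univ y (Finset.mem_univ i)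
    rw [hysum] at this
    linarith
  have hsplit : ∑ j, (y j) ^ 2 = (y i) ^ 2 + ∑ j ∈ Finset.univ.erase i, (y j) ^ 2 :=
    (Finset.add_sum_erase Finset.univ (fun j => (y j)^2) (Finset.mem_univ i)).symm
  have hCS : (∑ j ∈ Finset.univ.erase i, y j) ^ 2
      ≤ ((n:ℝ) - 1) * ∑ j ∈ Finset.univ.erase i, (y j) ^ 2 := by
    have h := Finset.sum_mul_sq_le_sq_mul_sq (Finset.univ.erase i) y (fun _ => (1:ℝ))
    simp only [mul_one, one_pow, Finset.sum_const, nsmul_eq_mul] at h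
    have hcard : ((Finset.univ.erase i).card : ℝ) = (n:ℝ) - 1 := by
      rw [Finset.card_erase_of_mem (Finset.mem_univ i), Finset.card_univ, Fintype.card_fin]
      have h1 : 1 ≤ n := by omega
      push_cast [Nat.cast_sub h1]
      ring
    rw [hcard] at h
    linarith [h]
  have e : ∑ j ∈ Finset.univ.erase i, (y j) ^ 2 = ∑ j, (y j) ^ 2 - (y i) ^ 2 := by
    linarith [hsplit]
  have h1 : (y i)^2 ≤ ((n:ℝ) - 1) * (∑ j, (y j)^2 - (y i)^2) := by
    calc (y i)^2 = (∑ j ∈ Finset.univ.erase i, y j)^2 := by rw [hyi]; ring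
      _ ≤ ((n:ℝ) - 1) * ∑ j ∈ Finset.univ.erase i, (y j) ^ 2 := hCS
      _ = ((n:ℝ) - 1) * (∑ j, (y j)^2 - (y i)^2) := by rw [e]
  have hA : (n:ℝ) * (y i)^2 ≤ ((n:ℝ) - 1) * ∑ j, (y j)^2 := by nlinarith [h1, hn1, sq_nonneg (y i)]
  have hB : ((n:ℝ) - 1) * ∑ j, (y j)^2 ≤ p^2 / (n:ℝ) := by
    have h2 := mul_le_mul_of_nonneg_left hSsq (le_of_lt hnR1)
    have h3 : ((n:ℝ) - 1) * (p ^ 2 / ((n:ℝ) * ((n:ℝ) - 1))) = p^2/(n:ℝ) := by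
      field_simp
    calc ((n:ℝ) - 1) * ∑ j, (y j)^2 ≤ ((n:ℝ) - 1) * (p ^ 2 / ((n:ℝ) * ((n:ℝ) - 1))) := h2
      _ = p^2/(n:ℝ) := h3
  have hyb : (y i)^2 ≤ (p / n)^2 := by
    have hAB : (n:ℝ) * (y i)^2 ≤ p^2/(n:ℝ) := hA.trans hB
    have h4 := mul_le_mul_of_nonneg_left hAB hnR.le
    have h5 : (n:ℝ) * (p^2/(n:ℝ)) = p^2 := by field_simp
    rw [h5] at h4
    rw [div_pow, le_div_iff₀ (by positivity : (0:ℝ) < (n:ℝ)^2)]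
    nlinarith [h4]
  have habs : -(p/(n:ℝ)) ≤ y i := by
    nlinarith [hyb, div_pos hp hnR]
  have hyval : y i = ν i - p / n := rfl
  exact (by linarith [habs, hyval ▸ habs] : (0:ℝ) ≤ ν i)
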